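/- Let 1 ≤ k ≤ 6, X a Banach space, 1 ≤ p < ∞, τ > 0, and let (e_n)_{n=0}^N ⊂ X with e_0 = ⋯ = e_{k−1} = 0. Define the BDF divided differences ė_n = (1/τ) Σ_{j=0}^k δ_j e_{n−j} for k ≤ n ≤ N. Then there is a constant C depending only on k and p (not on τ, N or X) such that (τ Σ_{n=k}^N ‖(e_n − e_{n−1})/τ‖_X^p)^{1/p} ≤ C (τ Σ_{n=k}^N ‖ė_n‖_X^p)^{1/p}. -/

import Mathlib

open Finset

/-- Convolution of a scalar sequence with a vector sequence. -/
def bdfConv {X : Type*} [AddCommMonoid X] [Module ℝ X] (c : ℕ → ℝ) (v : ℕ → X) (n : ℕ) : X :=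
  ∑ j ∈ Finset.range (n + 1), c j • v (n - j)

lemma bdfConv_assoc {X : Type*} [AddCommGroup X] [Module ℝ X] (c b : ℕ → ℝ) (v : ℕ → X)
    (n : ℕ) :
    bdfConv c (bdfConv b v) n
      = bdfConv (fun m => ∑ j ∈ Finset.range (m + 1), c j * b (m - j)) v n := by
  unfold bdfConv
  have L : ∑ j ∈ range (n + 1), c j • ∑ i ∈ range (n - j + 1), b i • v (n - j - i)
      = ∑ j ∈ range (n + 1), ∑ i ∈ range (n - j + 1), (c j * b i) • v (n - j - i) := by
    refine Finset.sum_congr rfl fun j _ => ?_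
    rw [Finset.smul_sum]
    exact Finset.sum_congr rfl fun i _ => by rw [smul_smul]
  have R : ∑ m ∈ range (n + 1), (∑ j ∈ range (m + 1), c j * b (m - j)) • v (n - m)
      = ∑ m ∈ range (n + 1), ∑ j ∈ range (m + 1), (c j * b (m - j)) • v (n - m) := by
    refine Finset.sum_congr rfl fun m _ => ?_
    rw [Finset.sum_smul]
  rw [L, R]
  rw [Finset.sum_sigma' (range (n+1)) (fun j => range (n - j + 1))
    (fun j i => (c j * b i) • v (n - j - i)),
    Finset.sum_sigma' (range (n+1)) (fun m => range (m + 1))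
    (fun m j => (c j * b (m - j)) • v (n - m))]
  refine Finset.sum_nbij' (fun x => ⟨x.1 + x.2, x.1⟩) (fun y => ⟨y.2, y.1 - y.2⟩) ?_ ?_ ?_ ?_ ?_
  · rintro ⟨j, i⟩ h
    simp only [Finset.mem_sigma, Finset.mem_range] at h ⊢
    omega
  · rintro ⟨m, j⟩ h
    simp only [Finset.mem_sigma, Finset.mem_range] at h ⊢
    omega
  · rintro ⟨j, i⟩ h
    simp only [Finset.mem_sigma, Finset.mem_range] at h
    simp only [Sigma.mk.inj_iff, heq_eq_eq]
    simp only [true_and, and_true]; omega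
  · rintro ⟨m, j⟩ h
    simp only [Finset.mem_sigma, Finset.mem_range] at h
    simp only [Sigma.mk.inj_iff, heq_eq_eq]
    simp only [true_and, and_true]; omega
  · rintro ⟨j, i⟩ h
    simp only [Finset.mem_sigma, Finset.mem_range] at h
    have h1 : j + i - j = i := by omega
    have h2 : n - (j + i) = n - j - i := by omega
    simp [h1, h2]

lemma bdfConv_delta {X : Type*} [AddCommGroup X] [Module ℝ X] (v : ℕ → X) (n : ℕ) :
    bdfConv (fun i => if i = 0 then (1:ℝ) else 0) v n = v n := by
  unfold bdfConv
  rw [Finset.sum_eq_single 0]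
  · simp
  · intro j _ hj; simp [hj]
  · intro h; simp at h

lemma bdfConv_sub {X : Type*} [AddCommGroup X] [Module ℝ X] (a b : ℕ → ℝ) (v : ℕ → X) (n : ℕ) :
    bdfConv (fun i => a i - b i) v n = bdfConv a v n - bdfConv b v n := by
  unfold bdfConv
  rw [← Finset.sum_sub_distrib]
  exact Finset.sum_congr rfl fun j _ => by rw [sub_smul]

/-- Summation by parts: the BDF sum equals the convolution of `μc` with backward differences. -/
lemma bdf_eq_conv_diff (k : ℕ) (hk1 : 1 ≤ k) (δc μc : ℕ → ℝ)
    (hδ0 : δc 0 = μc 0) (hδj : ∀ j, 1 ≤ j → j ≤ k → δc j = μc j - μc (j - 1))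
    (htop : ∀ i, k ≤ i → μc i = 0)
    {X : Type*} [AddCommGroup X] [Module ℝ X] (e : ℕ → X) (he : ∀ n < k, e n = 0) (n : ℕ) :
    ∑ j ∈ Finset.range (k + 1), δc j • e (n - j)
      = bdfConv μc (fun m => e m - e (m - 1)) n := by
  have he0 : e 0 = 0 := he 0 hk1
  set T := max (n + 1) (k + 1) with hT
  have hsub1 : Finset.range (n + 1) ⊆ Finset.range T := Finset.range_subset_range.2 (le_max_left _ _)
  have hsub2 : Finset.range (k + 1) ⊆ Finset.range T := Finset.range_subset_range.2 (le_max_right _ _)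
  have hsub3 : Finset.range k ⊆ Finset.range T := (Finset.range_subset_range.2 (by omega : k ≤ k+1)).trans hsub2
  -- four padding identities
  have S1 : ∑ i ∈ range (n + 1), μc i • e (n - i) = ∑ i ∈ range T, μc i • e (n - i) := by
    refine Finset.sum_subset hsub1 fun i _ hi => ?_
    simp only [Finset.mem_range, not_lt] at hi
    rcases le_or_gt k i with h | h
    · rw [htop i h, zero_smul]
    · rw [show n - i = 0 by omega, he0, smul_zero]
  have S1' : ∑ j ∈ range (k + 1), μc j • e (n - j) = ∑ j ∈ range T, μc j • e (n - j) := by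
    refine Finset.sum_subset hsub2 fun j _ hj => ?_
    simp only [Finset.mem_range, not_lt] at hj
    rw [htop j (by omega), zero_smul]
  have S2 : ∑ i ∈ range (n + 1), μc i • e (n - i - 1) = ∑ i ∈ range T, μc i • e (n - i - 1) := by
    refine Finset.sum_subset hsub1 fun i _ hi => ?_
    simp only [Finset.mem_range, not_lt] at hi
    rcases le_or_gt k i with h | h
    · rw [htop i h, zero_smul]
    · rw [show n - i - 1 = 0 by omega, he0, smul_zero]
  have S2' : ∑ i ∈ range k, μc i • e (n - i - 1) = ∑ i ∈ range T, μc i • e (n - i - 1) := by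
    refine Finset.sum_subset hsub3 fun i _ hi => ?_
    simp only [Finset.mem_range, not_lt] at hi
    rcases le_or_gt k i with h | h
    · rw [htop i h, zero_smul]
    · rw [show n - i - 1 = 0 by omega, he0, smul_zero]
  -- left side, peel off j = 0 and use δc relations
  have LHS1 : ∑ j ∈ Finset.range (k + 1), δc j • e (n - j)
      = (∑ i ∈ range k, δc (i + 1) • e (n - (i + 1))) + δc 0 • e (n - 0) :=
    Finset.sum_range_succ' _ _
  have LHS2 : ∑ i ∈ range k, δc (i + 1) • e (n - (i + 1))
      = ∑ i ∈ range k, μc (i + 1) • e (n - (i + 1)) - ∑ i ∈ range k, μc i • e (n - i - 1) := by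
    rw [← Finset.sum_sub_distrib]
    refine Finset.sum_congr rfl fun i hi => ?_
    simp only [Finset.mem_range] at hi
    rw [hδj (i + 1) (by omega) (by omega)]
    have : i + 1 - 1 = i := by omega
    rw [this, sub_smul]
    have : n - (i + 1) = n - i - 1 := by omega
    rw [this]
  have LHS3 : (∑ i ∈ range k, μc (i + 1) • e (n - (i + 1))) + μc 0 • e (n - 0)
      = ∑ j ∈ range (k + 1), μc j • e (n - j) :=
    (Finset.sum_range_succ' (fun j => μc j • e (n - j)) k).symm
  have RHS : bdfConv μc (fun m => e m - e (m - 1)) n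
      = ∑ i ∈ range (n + 1), μc i • e (n - i) - ∑ i ∈ range (n + 1), μc i • e (n - i - 1) := by
    unfold bdfConv
    rw [← Finset.sum_sub_distrib]
    exact Finset.sum_congr rfl fun i _ => by rw [smul_sub]
  rw [RHS, LHS1, LHS2, hδ0, S1, S2, S2', ← S1', ← LHS3]
  abel

/-- The fixed point identity `d = q ⋆ g + E ⋆ d`. -/
lemma diff_eq_conv (k : ℕ) (μc q : ℕ → ℝ)
    {X : Type*} [AddCommGroup X] [Module ℝ X] (g d : ℕ → X)
    (hgd : ∀ n, g n = bdfConv μc d n) (n : ℕ) :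
    d n = bdfConv q g n
      + bdfConv (fun i => (if i = 0 then (1:ℝ) else 0)
          - ∑ j ∈ Finset.range (i + 1), q j * μc (i - j)) d n := by
  have hg2 : bdfConv q g n = bdfConv q (bdfConv μc d) n := by
    unfold bdfConv
    exact Finset.sum_congr rfl fun j _ => by rw [hgd]; rfl
  rw [hg2, bdfConv_assoc, bdfConv_sub, bdfConv_delta]
  abel


lemma pilp_ind_norm {X : Type*} [NormedAddCommGroup X] [NormedSpace ℝ X]
    (P : ENNReal) [Fact (1 ≤ P)] (p : ℝ) (hp0 : 0 < p) (htR : P.toReal = p)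
    (k N : ℕ) (w : ℕ → X) :
    ‖(WithLp.equiv P (∀ _ : Fin (N + 1), X)).symm
        (fun i : Fin (N + 1) => if k ≤ (i : ℕ) then w i else 0)‖
      = (∑ n ∈ Finset.Icc k N, ‖w n‖ ^ p) ^ (1 / p) := by
  rw [PiLp.norm_eq_sum (by rw [htR]; exact hp0), htR]
  simp only [WithLp.equiv_symm_apply, PiLp.toLp_apply]
  congr 1
  rw [Fin.sum_univ_eq_sum_range (fun n => ‖if k ≤ n then w n else (0:X)‖ ^ p)]
  have hterm : ∀ n, ‖if k ≤ n then w n else (0:X)‖ ^ p = if k ≤ n then ‖w n‖ ^ p else 0 := by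
    intro n; split
    · rfl
    · rw [norm_zero, Real.zero_rpow (by positivity)]
  simp_rw [hterm]
  rw [← Finset.sum_filter]
  congr 1
  ext m
  simp only [Finset.mem_filter, Finset.mem_range, Finset.mem_Icc]
  omega

lemma young_conv {X : Type*} [NormedAddCommGroup X] [NormedSpace ℝ X]
    (P : ENNReal) [Fact (1 ≤ P)] (p : ℝ) (hp0 : 0 < p) (htR : P.toReal = p)
    (k N : ℕ) (c : ℕ → ℝ) (S : ℝ)
    (hS : ∑ j ∈ Finset.range (N + 1), |c j| ≤ S)
    (v : ℕ → X) (hv : ∀ n < k, v n = 0) :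
    (∑ n ∈ Finset.Icc k N, ‖bdfConv c v n‖ ^ p) ^ (1 / p)
      ≤ S * (∑ n ∈ Finset.Icc k N, ‖v n‖ ^ p) ^ (1 / p) := by
  set B : ℝ := (∑ n ∈ Finset.Icc k N, ‖v n‖ ^ p) ^ (1 / p) with hB
  have hBnn : 0 ≤ B := Real.rpow_nonneg (Finset.sum_nonneg fun n _ => by positivity) _
  set V := PiLp P (fun _ : Fin (N + 1) => X) with hV
  set W : ℕ → V := fun j => (WithLp.equiv P (∀ _ : Fin (N + 1), X)).symm (fun i : Fin (N + 1) =>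
    if j ≤ (i : ℕ) ∧ k ≤ (i : ℕ) then c j • v ((i : ℕ) - j) else 0) with hW
  have hCv : (WithLp.equiv P (∀ _ : Fin (N + 1), X)).symm
        (fun i : Fin (N + 1) => if k ≤ (i : ℕ) then bdfConv c v i else 0)
      = ∑ j ∈ Finset.range (N + 1), W j := by
    ext i
    have hiN : (i : ℕ) ≤ N := by omega
    have happ : (∑ j ∈ Finset.range (N + 1), W j) i
        = ∑ j ∈ Finset.range (N + 1), W j i :=
      by rw [WithLp.ofLp_sum]; exact Finset.sum_apply i (Finset.range (N + 1)) (fun j => (W j).ofLp)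
    rw [happ]
    simp only [hW, WithLp.equiv_symm_apply, PiLp.toLp_apply]
    by_cases hki : k ≤ (i : ℕ)
    · simp only [hki, and_true, if_true]
      have e1 : ∑ j ∈ Finset.range ((i : ℕ) + 1),
            (if j ≤ (i : ℕ) then c j • v ((i : ℕ) - j) else 0)
          = ∑ j ∈ Finset.range (N + 1), (if j ≤ (i : ℕ) then c j • v ((i : ℕ) - j) else 0) :=
        Finset.sum_subset (Finset.range_subset_range.2 (by omega)) (fun j _ hj => by
          simp only [Finset.mem_range, not_lt] at hj
          rw [if_neg (by omega)])
      rw [← e1]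
      unfold bdfConv
      refine Finset.sum_congr rfl fun j hj => ?_
      simp only [Finset.mem_range] at hj
      rw [if_pos (by omega)]
    · simp only [hki, and_false, if_false]
      rw [Finset.sum_const_zero]
  have hWnorm : ∀ j, ‖W j‖ ≤ |c j| * B := by
    intro j
    have h1 : ‖W j‖ = (∑ i : Fin (N + 1), ‖W j i‖ ^ p) ^ (1 / p) := by
      rw [PiLp.norm_eq_sum (by rw [htR]; exact hp0), htR]
    have h2 : ∑ i : Fin (N + 1), ‖W j i‖ ^ p ≤ |c j| ^ p * ∑ n ∈ Finset.Icc k N, ‖v n‖ ^ p := by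
      simp only [hW, WithLp.equiv_symm_apply, PiLp.toLp_apply]
      rw [Fin.sum_univ_eq_sum_range
        (fun n => ‖if j ≤ n ∧ k ≤ n then c j • v (n - j) else (0:X)‖ ^ p)]
      have hterm : ∀ n, ‖if j ≤ n ∧ k ≤ n then c j • v (n - j) else (0:X)‖ ^ p
          = if j ≤ n ∧ k ≤ n then (|c j| * ‖v (n - j)‖) ^ p else 0 := by
        intro n; split
        · rw [norm_smul, Real.norm_eq_abs]
        · rw [norm_zero, Real.zero_rpow (by positivity)]
      simp_rw [hterm]
      rw [← Finset.sum_filter]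
      set A := (Finset.range (N + 1)).filter (fun n => j ≤ n ∧ k ≤ n) with hA
      have himg : ∑ n ∈ A, (|c j| * ‖v (n - j)‖) ^ p
          = ∑ m ∈ A.image (· - j), (|c j| * ‖v m‖) ^ p := by
        rw [Finset.sum_image ?_]
        intro x hx y hy hxy
        simp only [hA, Finset.coe_filter, Set.mem_setOf_eq, Finset.mem_range] at hx hy
        beta_reduce at hxy
        omega
      rw [himg]
      have hzero : ∑ m ∈ A.image (· - j), (|c j| * ‖v m‖) ^ p
          = ∑ m ∈ (A.image (· - j)).filter (k ≤ ·), (|c j| * ‖v m‖) ^ p := by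
        symm
        refine Finset.sum_subset (Finset.filter_subset _ _) fun m hm hm2 => ?_
        have hmk : ¬ k ≤ m := by
          by_contra hc
          exact hm2 (Finset.mem_filter.2 ⟨hm, hc⟩)
        rw [hv m (by omega), norm_zero, mul_zero, Real.zero_rpow (by positivity)]
      rw [hzero]
      have hsubIcc : (A.image (· - j)).filter (k ≤ ·) ⊆ Finset.Icc k N := by
        intro m hm
        simp only [Finset.mem_filter, Finset.mem_image, hA, Finset.mem_range,
          Finset.mem_Icc] at hm ⊢
        obtain ⟨⟨n, hn, rfl⟩, hk⟩ := hm
        omega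
      calc ∑ m ∈ (A.image (· - j)).filter (k ≤ ·), (|c j| * ‖v m‖) ^ p
          ≤ ∑ m ∈ Finset.Icc k N, (|c j| * ‖v m‖) ^ p :=
            Finset.sum_le_sum_of_subset_of_nonneg hsubIcc (fun m _ _ => by positivity)
        _ = |c j| ^ p * ∑ m ∈ Finset.Icc k N, ‖v m‖ ^ p := by
            rw [Finset.mul_sum]
            exact Finset.sum_congr rfl fun m _ =>
              Real.mul_rpow (abs_nonneg _) (norm_nonneg _)
    calc ‖W j‖ = (∑ i : Fin (N + 1), ‖W j i‖ ^ p) ^ (1 / p) := h1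
      _ ≤ (|c j| ^ p * ∑ n ∈ Finset.Icc k N, ‖v n‖ ^ p) ^ (1 / p) :=
          Real.rpow_le_rpow (Finset.sum_nonneg fun i _ => by positivity) h2 (by positivity)
      _ = (|c j| ^ p) ^ (1 / p) * B :=
          Real.mul_rpow (Real.rpow_nonneg (abs_nonneg _) _)
            (Finset.sum_nonneg fun n _ => by positivity)
      _ = |c j| * B := by
          rw [← Real.rpow_mul (abs_nonneg _), mul_one_div_cancel (ne_of_gt hp0),
            Real.rpow_one]
  calc (∑ n ∈ Finset.Icc k N, ‖bdfConv c v n‖ ^ p) ^ (1 / p)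
      = ‖(WithLp.equiv P (∀ _ : Fin (N + 1), X)).symm
          (fun i : Fin (N + 1) => if k ≤ (i : ℕ) then bdfConv c v i else 0)‖ :=
        (pilp_ind_norm P p hp0 htR k N _).symm
    _ = ‖∑ j ∈ Finset.range (N + 1), W j‖ := by rw [hCv]
    _ ≤ ∑ j ∈ Finset.range (N + 1), ‖W j‖ := norm_sum_le _ _
    _ ≤ ∑ j ∈ Finset.range (N + 1), |c j| * B := Finset.sum_le_sum fun j _ => hWnorm j
    _ = (∑ j ∈ Finset.range (N + 1), |c j|) * B := by rw [Finset.sum_mul]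
    _ ≤ S * B := mul_le_mul_of_nonneg_right hS hBnn
set_option maxRecDepth 8000
set_option maxHeartbeats 3200000
open Finset Polynomial

lemma coeff_one_sub_pow (m i : ℕ) :
    ((1 - Polynomial.X : Polynomial ℝ) ^ m).coeff i = (-1) ^ i * (m.choose i : ℝ) := by
  have hexp : (1 - Polynomial.X : Polynomial ℝ) ^ m
      = ∑ j ∈ Finset.range (m + 1), Polynomial.C ((-1) ^ j * (m.choose j : ℝ))
          * Polynomial.X ^ j := by
    rw [sub_eq_add_neg, add_comm, add_pow]
    refine Finset.sum_congr rfl fun j hj => ?_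
    rw [neg_pow, one_pow, mul_one, map_mul, map_pow, map_neg, map_one, map_natCast]
    ring
  rw [hexp, Polynomial.finset_sum_coeff]
  simp_rw [Polynomial.coeff_C_mul, Polynomial.coeff_X_pow]
  rw [Finset.sum_eq_single i]
  · simp
  · intro b _ hb
    rw [if_neg (fun h => hb h.symm), mul_zero]
  · intro hi
    simp only [Finset.mem_range, not_lt] at hi
    rw [Nat.choose_eq_zero_of_lt (by omega)]
    simp

lemma delta_coeffs (k : ℕ) (hk1 : 1 ≤ k) (δc : ℕ → ℝ)
    (hδ : ∀ ζ : ℂ, ∑ j ∈ Finset.range (k + 1), (δc j : ℂ) * ζ ^ j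
        = ∑ ℓ ∈ Finset.Icc 1 k, ((ℓ : ℂ))⁻¹ * (1 - ζ) ^ ℓ) :
    ∃ μc : ℕ → ℝ,
      δc 0 = μc 0 ∧ (∀ j, 1 ≤ j → j ≤ k → δc j = μc j - μc (j - 1)) ∧
      (∀ i, k ≤ i → μc i = 0) ∧
      (∀ i, μc i = ∑ ℓ ∈ Finset.Icc 1 k, (ℓ : ℝ)⁻¹ * ((-1) ^ i * (((ℓ - 1).choose i : ℕ) : ℝ))) := by
  set Mr : Polynomial ℝ :=
    ∑ ℓ ∈ Finset.Icc 1 k, Polynomial.C ((ℓ : ℝ)⁻¹) * (1 - Polynomial.X) ^ (ℓ - 1) with hMr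
  set Pδ : Polynomial ℝ :=
    ∑ j ∈ Finset.range (k + 1), Polynomial.C (δc j) * Polynomial.X ^ j with hPδ
  have e1 : ∀ z : ℂ, (Pδ.map (Complex.ofRealHom)).eval z
      = ∑ j ∈ Finset.range (k + 1), (δc j : ℂ) * z ^ j := by
    intro z
    rw [hPδ, Polynomial.map_sum, Polynomial.eval_finset_sum]
    refine Finset.sum_congr rfl fun j hj => ?_
    simp
  have e2 : ∀ z : ℂ, (((1 - Polynomial.X) * Mr).map (Complex.ofRealHom)).eval z
      = ∑ ℓ ∈ Finset.Icc 1 k, ((ℓ : ℂ))⁻¹ * (1 - z) ^ ℓ := by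
    intro z
    rw [hMr, Polynomial.map_mul, Polynomial.map_sum, Polynomial.eval_mul, Polynomial.eval_finset_sum, Finset.mul_sum]
    refine Finset.sum_congr rfl fun ℓ hℓ => ?_
    simp only [Finset.mem_Icc] at hℓ
    simp only [Polynomial.map_mul, Polynomial.map_pow, Polynomial.map_sub, Polynomial.map_one,
      Polynomial.map_C, Polynomial.map_X, Polynomial.eval_mul, Polynomial.eval_pow,
      Polynomial.eval_sub, Polynomial.eval_one, Polynomial.eval_X, Polynomial.eval_C]
    rw [mul_left_comm, ← pow_succ', show ℓ - 1 + 1 = ℓ from by omega]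
    simp [Complex.ofRealHom_eq_coe]
  have key : Pδ = (1 - Polynomial.X) * Mr := by
    have hinj : Function.Injective (Polynomial.map (Complex.ofRealHom)) :=
      Polynomial.map_injective _ Complex.ofReal_injective
    apply hinj
    apply Polynomial.funext
    intro z
    rw [e1 z, e2 z, hδ z]
  have hcoeffP : ∀ j, j ≤ k → Pδ.coeff j = δc j := by
    intro j hj
    rw [hPδ, Polynomial.finset_sum_coeff]
    simp_rw [Polynomial.coeff_C_mul, Polynomial.coeff_X_pow]
    rw [Finset.sum_eq_single j]
    · simp
    · intro b _ hb
      rw [if_neg (fun h => hb h.symm), mul_zero]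
    · intro hj'
      simp only [Finset.mem_range, not_lt] at hj'
      omega
  refine ⟨Mr.coeff, ?_, ?_, ?_, ?_⟩
  · have h0 : Pδ.coeff 0 = ((1 - Polynomial.X) * Mr).coeff 0 := by rw [key]
    rw [hcoeffP 0 (by omega)] at h0
    rw [h0, sub_mul, one_mul, Polynomial.coeff_sub, Polynomial.mul_coeff_zero,
      Polynomial.coeff_X_zero, zero_mul, sub_zero]
  · intro j hj1 hjk
    obtain ⟨j', rfl⟩ : ∃ j', j = j' + 1 := ⟨j - 1, by omega⟩
    have h0 : Pδ.coeff (j' + 1) = ((1 - Polynomial.X) * Mr).coeff (j' + 1) := by rw [key]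
    rw [hcoeffP _ hjk] at h0
    rw [h0, sub_mul, one_mul, Polynomial.coeff_sub, Polynomial.coeff_X_mul]
    simp
  · intro i hi
    rw [hMr, Polynomial.finset_sum_coeff]
    refine Finset.sum_eq_zero fun ℓ hℓ => ?_
    simp only [Finset.mem_Icc] at hℓ
    rw [Polynomial.coeff_C_mul, coeff_one_sub_pow, Nat.choose_eq_zero_of_lt (by omega)]
    simp
  · intro i
    rw [hMr, Polynomial.finset_sum_coeff]
    refine Finset.sum_congr rfl fun ℓ hℓ => ?_
    rw [Polynomial.coeff_C_mul, coeff_one_sub_pow]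
open Finset

lemma sum_abs_le_of_support (f : ℕ → ℝ) (R : ℕ) (hsupp : ∀ i, R ≤ i → f i = 0) (B : ℝ)
    (hB : ∑ i ∈ Finset.range R, |f i| ≤ B) : ∀ m, ∑ i ∈ Finset.range m, |f i| ≤ B := by
  intro m
  calc ∑ i ∈ Finset.range m, |f i|
      ≤ ∑ i ∈ Finset.range (max m R), |f i| :=
        Finset.sum_le_sum_of_subset_of_nonneg (Finset.range_subset_range.2 (le_max_left _ _))
          (fun i _ _ => abs_nonneg _)
    _ = ∑ i ∈ Finset.range R, |f i| := by
        symm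
        refine Finset.sum_subset (Finset.range_subset_range.2 (le_max_right _ _)) fun i _ hi => ?_
        simp only [Finset.mem_range, not_lt] at hi
        rw [hsupp i hi, abs_zero]
    _ ≤ B := hB

theorem bdf_master (k : ℕ) (hk1 : 1 ≤ k) (δc μc q : ℕ → ℝ) (Q : ℝ)
    (hδ0 : δc 0 = μc 0)
    (hδj : ∀ j, 1 ≤ j → j ≤ k → δc j = μc j - μc (j - 1))
    (htop : ∀ i, k ≤ i → μc i = 0)
    (hE : ∀ m, ∑ i ∈ Finset.range m,
        |(if i = 0 then (1:ℝ) else 0) - ∑ j ∈ Finset.range (i + 1), q j * μc (i - j)| ≤ 1/2)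
    (hq : ∀ m, ∑ j ∈ Finset.range m, |q j| ≤ Q)
    (p : ℝ) (hp : 1 ≤ p)
    (X : Type*) [NormedAddCommGroup X] [NormedSpace ℝ X]
    (τ : ℝ) (hτ : 0 < τ) (N : ℕ) (e : ℕ → X) (he : ∀ n < k, e n = 0) :
    (τ * ∑ n ∈ Finset.Icc k N, ‖(1 / τ) • (e n - e (n - 1))‖ ^ p) ^ (1 / p)
      ≤ (2 * Q) * (τ * ∑ n ∈ Finset.Icc k N,
          ‖(1 / τ) • ∑ j ∈ Finset.range (k + 1), δc j • e (n - j)‖ ^ p) ^ (1 / p) := by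
  have hp0 : (0:ℝ) < p := by linarith
  have hQ0 : 0 ≤ Q := le_trans (by positivity) (hq 1)
  set d : ℕ → X := fun m => e m - e (m - 1) with hd
  set g : ℕ → X := fun n => ∑ j ∈ Finset.range (k + 1), δc j • e (n - j) with hg
  have hd0 : ∀ n < k, d n = 0 := by
    intro n hn
    rw [hd]
    simp only
    rw [he n hn, he (n - 1) (by omega), sub_zero]
  have hgd : ∀ n, g n = bdfConv μc d n := fun n =>
    bdf_eq_conv_diff k hk1 δc μc hδ0 hδj htop e he n
  have hg0 : ∀ n < k, g n = 0 := by
    intro n hn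
    rw [hgd n]
    unfold bdfConv
    refine Finset.sum_eq_zero fun i _ => ?_
    rw [hd0 (n - i) (by omega), smul_zero]
  set E : ℕ → ℝ := fun i => (if i = 0 then (1:ℝ) else 0)
    - ∑ j ∈ Finset.range (i + 1), q j * μc (i - j) with hEdef
  have hdd : ∀ n, d n = bdfConv q g n + bdfConv E d n := fun n =>
    diff_eq_conv k μc q g d hgd n
  set P : ENNReal := ENNReal.ofReal p with hP
  haveI : Fact (1 ≤ P) := ⟨by rw [hP]; exact ENNReal.one_le_ofReal.2 hp⟩
  have htR : P.toReal = p := ENNReal.toReal_ofReal hp0.le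
  set A : ℝ := (∑ n ∈ Finset.Icc k N, ‖d n‖ ^ p) ^ (1 / p) with hA
  set Bg : ℝ := (∑ n ∈ Finset.Icc k N, ‖g n‖ ^ p) ^ (1 / p) with hBg
  have hAnn : 0 ≤ A := Real.rpow_nonneg (Finset.sum_nonneg fun n _ => by positivity) _
  have hBnn : 0 ≤ Bg := Real.rpow_nonneg (Finset.sum_nonneg fun n _ => by positivity) _
  have tri : A ≤ (∑ n ∈ Finset.Icc k N, ‖bdfConv q g n‖ ^ p) ^ (1 / p)
      + (∑ n ∈ Finset.Icc k N, ‖bdfConv E d n‖ ^ p) ^ (1 / p) := by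
    have hsum : (WithLp.equiv P (∀ _ : Fin (N + 1), X)).symm
          (fun i : Fin (N + 1) => if k ≤ (i : ℕ) then d i else 0)
        = (WithLp.equiv P (∀ _ : Fin (N + 1), X)).symm
            (fun i : Fin (N + 1) => if k ≤ (i : ℕ) then bdfConv q g i else 0)
          + (WithLp.equiv P (∀ _ : Fin (N + 1), X)).symm
            (fun i : Fin (N + 1) => if k ≤ (i : ℕ) then bdfConv E d i else 0) := by
      ext i
      simp only [WithLp.equiv_symm_apply, PiLp.add_apply, PiLp.toLp_apply]
      by_cases hki : k ≤ (i : ℕ)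
      · simp only [hki, if_true]
        exact hdd i
      · simp only [hki, if_false, add_zero]
    calc A = ‖(WithLp.equiv P (∀ _ : Fin (N + 1), X)).symm
          (fun i : Fin (N + 1) => if k ≤ (i : ℕ) then d i else 0)‖ :=
          (pilp_ind_norm P p hp0 htR k N d).symm
      _ ≤ _ := by
          rw [hsum]
          refine le_trans (norm_add_le _ _) ?_
          rw [pilp_ind_norm P p hp0 htR k N (fun n => bdfConv q g n),
            pilp_ind_norm P p hp0 htR k N (fun n => bdfConv E d n)]
  have h1 : (∑ n ∈ Finset.Icc k N, ‖bdfConv q g n‖ ^ p) ^ (1 / p) ≤ Q * Bg :=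
    young_conv P p hp0 htR k N q Q (hq (N + 1)) g hg0
  have h2 : (∑ n ∈ Finset.Icc k N, ‖bdfConv E d n‖ ^ p) ^ (1 / p) ≤ (1/2) * A :=
    young_conv P p hp0 htR k N E (1/2) (hE (N + 1)) d hd0
  have hmain : A ≤ 2 * Q * Bg := by linarith
  -- scaling with τ
  have hscale : ∀ w : ℕ → X,
      (τ * ∑ n ∈ Finset.Icc k N, ‖(1 / τ) • w n‖ ^ p) ^ (1 / p)
        = (τ * (1 / τ) ^ p) ^ (1 / p) * (∑ n ∈ Finset.Icc k N, ‖w n‖ ^ p) ^ (1 / p) := by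
    intro w
    have hterm : ∀ n, ‖(1 / τ) • w n‖ ^ p = (1 / τ) ^ p * ‖w n‖ ^ p := by
      intro n
      rw [norm_smul, Real.norm_eq_abs, abs_of_pos (by positivity),
        Real.mul_rpow (by positivity) (norm_nonneg _)]
    simp_rw [hterm]
    rw [← Finset.mul_sum, ← mul_assoc,
      Real.mul_rpow (by positivity) (Finset.sum_nonneg fun n _ => by positivity)]
  rw [hscale (fun m => e m - e (m - 1)), hscale (fun n => ∑ j ∈ Finset.range (k + 1), δc j • e (n - j))]
  have hF : 0 ≤ (τ * (1 / τ) ^ p) ^ (1 / p) := by positivity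
  calc (τ * (1 / τ) ^ p) ^ (1 / p) * A
      ≤ (τ * (1 / τ) ^ p) ^ (1 / p) * (2 * Q * Bg) :=
        mul_le_mul_of_nonneg_left hmain hF
    _ = 2 * Q * ((τ * (1 / τ) ^ p) ^ (1 / p) * Bg) := by ring

lemma E_support (k L : ℕ) (μc q : ℕ → ℝ) (hkL : 1 ≤ L + k)
    (hμ : ∀ i, k ≤ i → μc i = 0) (hq : ∀ n, L ≤ n → q n = 0) :
    ∀ i, L + k ≤ i →
      (if i = 0 then (1:ℝ) else 0) - ∑ j ∈ Finset.range (i + 1), q j * μc (i - j) = 0 := by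
  intro i hi
  rw [if_neg (by omega), zero_sub, neg_eq_zero]
  refine Finset.sum_eq_zero fun j hj => ?_
  simp only [Finset.mem_range] at hj
  rcases le_or_gt L j with h | h
  · rw [hq j h, zero_mul]
  · rw [hμ (i - j) (by omega), mul_zero]

/-- **Backward differences are controlled by BDF divided differences in `ℓ^p(X)`.**
For `1 ≤ k ≤ 6` and `1 ≤ p < ∞` there is a constant `C`, depending only on `k` and `p`
(not on `τ`, `N` or the normed space `X`), such that for every sequence `(e_n)` with
`e_0 = ⋯ = e_{k-1} = 0` and the BDF divided differences
`ė_n = (1/τ) ∑_{j=0}^k δ_j e_{n-j}`,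
`(τ ∑_{n=k}^N ‖(e_n - e_{n-1})/τ‖^p)^{1/p} ≤ C (τ ∑_{n=k}^N ‖ė_n‖^p)^{1/p}`. -/
theorem bdf_backward_difference_bound (k : ℕ) (hk1 : 1 ≤ k) (hk6 : k ≤ 6)
    (δc : ℕ → ℝ)
    (hδ : ∀ ζ : ℂ, ∑ j ∈ Finset.range (k + 1), (δc j : ℂ) * ζ ^ j
        = ∑ ℓ ∈ Finset.Icc 1 k, ((ℓ : ℂ))⁻¹ * (1 - ζ) ^ ℓ)
    (p : ℝ) (hp : 1 ≤ p) :
    ∃ C : ℝ, ∀ (X : Type*) [NormedAddCommGroup X] [NormedSpace ℝ X]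
      (τ : ℝ), 0 < τ → ∀ (N : ℕ) (e : ℕ → X), (∀ n < k, e n = 0) →
      (τ * ∑ n ∈ Finset.Icc k N, ‖(1 / τ) • (e n - e (n - 1))‖ ^ p) ^ (1 / p)
      ≤ C * (τ * ∑ n ∈ Finset.Icc k N,
          ‖(1 / τ) • ∑ j ∈ Finset.range (k + 1), δc j • e (n - j)‖ ^ p) ^ (1 / p) := by
  obtain ⟨μc, hδ0, hδj, htop, hform⟩ := delta_coeffs k hk1 δc hδ
  interval_cases k
  · -- k = 1
    have hμc : ∀ i, μc i = ([(1 : ℝ)] : List ℝ).getD i 0 := by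
      intro i
      rcases i with _|i
      · rw [hform]
        norm_num [Finset.sum_Icc_succ_top, Finset.Icc_self, Nat.choose,
          List.getD_cons_zero, List.getD_cons_succ]
      · rw [htop _ (by omega)]
        symm
        apply List.getD_eq_default
        simp
    have hqs : ∀ n, 1 ≤ n → (fun n => ([(1 : ℝ)] : List ℝ).getD n 0) n = 0 := by
      intro n hn
      apply List.getD_eq_default
      simp
      omega
    have hqb : ∀ m, ∑ j ∈ Finset.range m, |(fun n => ([(1 : ℝ)] : List ℝ).getD n 0) j| ≤ (1000000/1000000 : ℝ) := by
      apply sum_abs_le_of_support _ 1 hqs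
      norm_num [Finset.sum_range_succ, List.getD_cons_zero, List.getD_cons_succ,
        abs_of_nonneg, abs_of_nonpos]
    have hEs := E_support 1 1 μc (fun n => ([(1 : ℝ)] : List ℝ).getD n 0) (by omega) htop hqs
    have hEb : ∀ m, ∑ i ∈ Finset.range m,
        |(if i = 0 then (1:ℝ) else 0)
          - ∑ j ∈ Finset.range (i + 1), (fun n => ([(1 : ℝ)] : List ℝ).getD n 0) j * μc (i - j)| ≤ 1/2 := by
      apply sum_abs_le_of_support _ 2 hEs
      simp only [hμc]
      norm_num [Finset.sum_range_succ, List.getD_cons_zero, List.getD_cons_succ, List.getD,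
        abs_of_nonneg, abs_of_nonpos]
    exact ⟨2 * (1000000/1000000 : ℝ), fun X _ _ τ hτ N e he =>
      bdf_master 1 (by norm_num) δc μc (fun n => ([(1 : ℝ)] : List ℝ).getD n 0) (1000000/1000000 : ℝ)
        hδ0 hδj htop hEb hqb p hp X τ hτ N e he⟩
  · -- k = 2
    have hμc : ∀ i, μc i = ([(3/2 : ℝ), (-1/2 : ℝ)] : List ℝ).getD i 0 := by
      intro i
      rcases i with _|_|i
      · rw [hform]
        norm_num [Finset.sum_Icc_succ_top, Finset.Icc_self, Nat.choose,
          List.getD_cons_zero, List.getD_cons_succ]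
      · rw [hform]
        norm_num [Finset.sum_Icc_succ_top, Finset.Icc_self, Nat.choose,
          List.getD_cons_zero, List.getD_cons_succ]
      · rw [htop _ (by omega)]
        symm
        apply List.getD_eq_default
        simp
    have hqs : ∀ n, 1 ≤ n → (fun n => ([(666667/1000000 : ℝ)] : List ℝ).getD n 0) n = 0 := by
      intro n hn
      apply List.getD_eq_default
      simp
      omega
    have hqb : ∀ m, ∑ j ∈ Finset.range m, |(fun n => ([(666667/1000000 : ℝ)] : List ℝ).getD n 0) j| ≤ (666667/1000000 : ℝ) := by
      apply sum_abs_le_of_support _ 1 hqs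
      norm_num [Finset.sum_range_succ, List.getD_cons_zero, List.getD_cons_succ,
        abs_of_nonneg, abs_of_nonpos]
    have hEs := E_support 2 1 μc (fun n => ([(666667/1000000 : ℝ)] : List ℝ).getD n 0) (by omega) htop hqs
    have hEb : ∀ m, ∑ i ∈ Finset.range m,
        |(if i = 0 then (1:ℝ) else 0)
          - ∑ j ∈ Finset.range (i + 1), (fun n => ([(666667/1000000 : ℝ)] : List ℝ).getD n 0) j * μc (i - j)| ≤ 1/2 := by
      apply sum_abs_le_of_support _ 3 hEs
      simp only [hμc]
      norm_num [Finset.sum_range_succ, List.getD_cons_zero, List.getD_cons_succ, List.getD,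
        abs_of_nonneg, abs_of_nonpos]
    exact ⟨2 * (666667/1000000 : ℝ), fun X _ _ τ hτ N e he =>
      bdf_master 2 (by norm_num) δc μc (fun n => ([(666667/1000000 : ℝ)] : List ℝ).getD n 0) (666667/1000000 : ℝ)
        hδ0 hδj htop hEb hqb p hp X τ hτ N e he⟩
  · -- k = 3
    have hμc : ∀ i, μc i = ([(11/6 : ℝ), (-7/6 : ℝ), (1/3 : ℝ)] : List ℝ).getD i 0 := by
      intro i
      rcases i with _|_|_|i
      · rw [hform]
        norm_num [Finset.sum_Icc_succ_top, Finset.Icc_self, Nat.choose,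
          List.getD_cons_zero, List.getD_cons_succ]
      · rw [hform]
        norm_num [Finset.sum_Icc_succ_top, Finset.Icc_self, Nat.choose,
          List.getD_cons_zero, List.getD_cons_succ]
      · rw [hform]
        norm_num [Finset.sum_Icc_succ_top, Finset.Icc_self, Nat.choose,
          List.getD_cons_zero, List.getD_cons_succ]
      · rw [htop _ (by omega)]
        symm
        apply List.getD_eq_default
        simp
    have hqs : ∀ n, 2 ≤ n → (fun n => ([(109091/200000 : ℝ), (347107/1000000 : ℝ)] : List ℝ).getD n 0) n = 0 := by
      intro n hn
      apply List.getD_eq_default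
      simp
      omega
    have hqb : ∀ m, ∑ j ∈ Finset.range m, |(fun n => ([(109091/200000 : ℝ), (347107/1000000 : ℝ)] : List ℝ).getD n 0) j| ≤ (892562/1000000 : ℝ) := by
      apply sum_abs_le_of_support _ 2 hqs
      norm_num [Finset.sum_range_succ, List.getD_cons_zero, List.getD_cons_succ,
        abs_of_nonneg, abs_of_nonpos]
    have hEs := E_support 3 2 μc (fun n => ([(109091/200000 : ℝ), (347107/1000000 : ℝ)] : List ℝ).getD n 0) (by omega) htop hqs
    have hEb : ∀ m, ∑ i ∈ Finset.range m,
        |(if i = 0 then (1:ℝ) else 0)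
          - ∑ j ∈ Finset.range (i + 1), (fun n => ([(109091/200000 : ℝ), (347107/1000000 : ℝ)] : List ℝ).getD n 0) j * μc (i - j)| ≤ 1/2 := by
      apply sum_abs_le_of_support _ 5 hEs
      simp only [hμc]
      norm_num [Finset.sum_range_succ, List.getD_cons_zero, List.getD_cons_succ, List.getD,
        abs_of_nonneg, abs_of_nonpos]
    exact ⟨2 * (892562/1000000 : ℝ), fun X _ _ τ hτ N e he =>
      bdf_master 3 (by norm_num) δc μc (fun n => ([(109091/200000 : ℝ), (347107/1000000 : ℝ)] : List ℝ).getD n 0) (892562/1000000 : ℝ)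
        hδ0 hδj htop hEb hqb p hp X τ hτ N e he⟩
  · -- k = 4
    have hμc : ∀ i, μc i = ([(25/12 : ℝ), (-23/12 : ℝ), (13/12 : ℝ), (-1/4 : ℝ)] : List ℝ).getD i 0 := by
      intro i
      rcases i with _|_|_|_|i
      · rw [hform]
        norm_num [Finset.sum_Icc_succ_top, Finset.Icc_self, Nat.choose,
          List.getD_cons_zero, List.getD_cons_succ]
      · rw [hform]
        norm_num [Finset.sum_Icc_succ_top, Finset.Icc_self, Nat.choose,
          List.getD_cons_zero, List.getD_cons_succ]
      · rw [hform]
        norm_num [Finset.sum_Icc_succ_top, Finset.Icc_self, Nat.choose,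
          List.getD_cons_zero, List.getD_cons_succ]
      · rw [hform]
        norm_num [Finset.sum_Icc_succ_top, Finset.Icc_self, Nat.choose,
          List.getD_cons_zero, List.getD_cons_succ]
      · rw [htop _ (by omega)]
        symm
        apply List.getD_eq_default
        simp
    have hqs : ∀ n, 3 ≤ n → (fun n => ([(12/25 : ℝ), (276/625 : ℝ), (2448/15625 : ℝ)] : List ℝ).getD n 0) n = 0 := by
      intro n hn
      apply List.getD_eq_default
      simp
      omega
    have hqb : ∀ m, ∑ j ∈ Finset.range m, |(fun n => ([(12/25 : ℝ), (276/625 : ℝ), (2448/15625 : ℝ)] : List ℝ).getD n 0) j| ≤ (1078272/1000000 : ℝ) := by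
      apply sum_abs_le_of_support _ 3 hqs
      norm_num [Finset.sum_range_succ, List.getD_cons_zero, List.getD_cons_succ,
        abs_of_nonneg, abs_of_nonpos]
    have hEs := E_support 4 3 μc (fun n => ([(12/25 : ℝ), (276/625 : ℝ), (2448/15625 : ℝ)] : List ℝ).getD n 0) (by omega) htop hqs
    have hEb : ∀ m, ∑ i ∈ Finset.range m,
        |(if i = 0 then (1:ℝ) else 0)
          - ∑ j ∈ Finset.range (i + 1), (fun n => ([(12/25 : ℝ), (276/625 : ℝ), (2448/15625 : ℝ)] : List ℝ).getD n 0) j * μc (i - j)| ≤ 1/2 := by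
      apply sum_abs_le_of_support _ 7 hEs
      simp only [hμc]
      norm_num [Finset.sum_range_succ, List.getD_cons_zero, List.getD_cons_succ, List.getD,
        abs_of_nonneg, abs_of_nonpos]
    exact ⟨2 * (1078272/1000000 : ℝ), fun X _ _ τ hτ N e he =>
      bdf_master 4 (by norm_num) δc μc (fun n => ([(12/25 : ℝ), (276/625 : ℝ), (2448/15625 : ℝ)] : List ℝ).getD n 0) (1078272/1000000 : ℝ)
        hδ0 hδj htop hEb hqb p hp X τ hτ N e he⟩
  · -- k = 5
    have hμc : ∀ i, μc i = ([(137/60 : ℝ), (-163/60 : ℝ), (137/60 : ℝ), (-21/20 : ℝ), (1/5 : ℝ)] : List ℝ).getD i 0 := by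
      intro i
      rcases i with _|_|_|_|_|i
      · rw [hform]
        norm_num [Finset.sum_Icc_succ_top, Finset.Icc_self, Nat.choose,
          List.getD_cons_zero, List.getD_cons_succ]
      · rw [hform]
        norm_num [Finset.sum_Icc_succ_top, Finset.Icc_self, Nat.choose,
          List.getD_cons_zero, List.getD_cons_succ]
      · rw [hform]
        norm_num [Finset.sum_Icc_succ_top, Finset.Icc_self, Nat.choose,
          List.getD_cons_zero, List.getD_cons_succ]
      · rw [hform]
        norm_num [Finset.sum_Icc_succ_top, Finset.Icc_self, Nat.choose,
          List.getD_cons_zero, List.getD_cons_succ]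
      · rw [hform]
        norm_num [Finset.sum_Icc_succ_top, Finset.Icc_self, Nat.choose,
          List.getD_cons_zero, List.getD_cons_succ]
      · rw [htop _ (by omega)]
        symm
        apply List.getD_eq_default
        simp
    have hqs : ∀ n, 3 ≤ n → (fun n => ([(109489/250000 : ℝ), (32567/62500 : ℝ), (36401/200000 : ℝ)] : List ℝ).getD n 0) n = 0 := by
      intro n hn
      apply List.getD_eq_default
      simp
      omega
    have hqb : ∀ m, ∑ j ∈ Finset.range m, |(fun n => ([(109489/250000 : ℝ), (32567/62500 : ℝ), (36401/200000 : ℝ)] : List ℝ).getD n 0) j| ≤ (1141033/1000000 : ℝ) := by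
      apply sum_abs_le_of_support _ 3 hqs
      norm_num [Finset.sum_range_succ, List.getD_cons_zero, List.getD_cons_succ,
        abs_of_nonneg, abs_of_nonpos]
    have hEs := E_support 5 3 μc (fun n => ([(109489/250000 : ℝ), (32567/62500 : ℝ), (36401/200000 : ℝ)] : List ℝ).getD n 0) (by omega) htop hqs
    have hEb : ∀ m, ∑ i ∈ Finset.range m,
        |(if i = 0 then (1:ℝ) else 0)
          - ∑ j ∈ Finset.range (i + 1), (fun n => ([(109489/250000 : ℝ), (32567/62500 : ℝ), (36401/200000 : ℝ)] : List ℝ).getD n 0) j * μc (i - j)| ≤ 1/2 := by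
      apply sum_abs_le_of_support _ 8 hEs
      simp only [hμc]
      norm_num [Finset.sum_range_succ, List.getD_cons_zero, List.getD_cons_succ, List.getD,
        abs_of_nonneg, abs_of_nonpos]
    exact ⟨2 * (1141033/1000000 : ℝ), fun X _ _ τ hτ N e he =>
      bdf_master 5 (by norm_num) δc μc (fun n => ([(109489/250000 : ℝ), (32567/62500 : ℝ), (36401/200000 : ℝ)] : List ℝ).getD n 0) (1141033/1000000 : ℝ)
        hδ0 hδj htop hEb hqb p hp X τ hτ N e he⟩
  · -- k = 6
    have hμc : ∀ i, μc i = ([(49/20 : ℝ), (-71/20 : ℝ), (79/20 : ℝ), (-163/60 : ℝ), (31/30 : ℝ), (-1/6 : ℝ)] : List ℝ).getD i 0 := by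
      intro i
      rcases i with _|_|_|_|_|_|i
      · rw [hform]
        norm_num [Finset.sum_Icc_succ_top, Finset.Icc_self, Nat.choose,
          List.getD_cons_zero, List.getD_cons_succ]
      · rw [hform]
        norm_num [Finset.sum_Icc_succ_top, Finset.Icc_self, Nat.choose,
          List.getD_cons_zero, List.getD_cons_succ]
      · rw [hform]
        norm_num [Finset.sum_Icc_succ_top, Finset.Icc_self, Nat.choose,
          List.getD_cons_zero, List.getD_cons_succ]
      · rw [hform]
        norm_num [Finset.sum_Icc_succ_top, Finset.Icc_self, Nat.choose,
          List.getD_cons_zero, List.getD_cons_succ]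
      · rw [hform]
        norm_num [Finset.sum_Icc_succ_top, Finset.Icc_self, Nat.choose,
          List.getD_cons_zero, List.getD_cons_succ]
      · rw [hform]
        norm_num [Finset.sum_Icc_succ_top, Finset.Icc_self, Nat.choose,
          List.getD_cons_zero, List.getD_cons_succ]
      · rw [htop _ (by omega)]
        symm
        apply List.getD_eq_default
        simp
    have hqs : ∀ n, 12 ≤ n → (fun n => ([(408163/1000000 : ℝ), (29571/50000 : ℝ), (198897/1000000 : ℝ), (-26591/125000 : ℝ), (-72633/500000 : ℝ), (2627/20000 : ℝ), (144991/1000000 : ℝ), (-11901/200000 : ℝ), (-63769/500000 : ℝ), (6627/1000000 : ℝ), (97027/1000000 : ℝ), (11723/500000 : ℝ)] : List ℝ).getD n 0) n = 0 := by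
      intro n hn
      apply List.getD_eq_default
      simp
      omega
    have hqb : ∀ m, ∑ j ∈ Finset.range m, |(fun n => ([(408163/1000000 : ℝ), (29571/50000 : ℝ), (198897/1000000 : ℝ), (-26591/125000 : ℝ), (-72633/500000 : ℝ), (2627/20000 : ℝ), (144991/1000000 : ℝ), (-11901/200000 : ℝ), (-63769/500000 : ℝ), (6627/1000000 : ℝ), (97027/1000000 : ℝ), (11723/500000 : ℝ)] : List ℝ).getD n 0) j| ≤ (2146958/1000000 : ℝ) := by
      apply sum_abs_le_of_support _ 12 hqs
      norm_num [Finset.sum_range_succ, List.getD_cons_zero, List.getD_cons_succ,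
        abs_of_nonneg, abs_of_nonpos]
    have hEs := E_support 6 12 μc (fun n => ([(408163/1000000 : ℝ), (29571/50000 : ℝ), (198897/1000000 : ℝ), (-26591/125000 : ℝ), (-72633/500000 : ℝ), (2627/20000 : ℝ), (144991/1000000 : ℝ), (-11901/200000 : ℝ), (-63769/500000 : ℝ), (6627/1000000 : ℝ), (97027/1000000 : ℝ), (11723/500000 : ℝ)] : List ℝ).getD n 0) (by omega) htop hqs
    have hEb : ∀ m, ∑ i ∈ Finset.range m,
        |(if i = 0 then (1:ℝ) else 0)
          - ∑ j ∈ Finset.range (i + 1), (fun n => ([(408163/1000000 : ℝ), (29571/50000 : ℝ), (198897/1000000 : ℝ), (-26591/125000 : ℝ), (-72633/500000 : ℝ), (2627/20000 : ℝ), (144991/1000000 : ℝ), (-11901/200000 : ℝ), (-63769/500000 : ℝ), (6627/1000000 : ℝ), (97027/1000000 : ℝ), (11723/500000 : ℝ)] : List ℝ).getD n 0) j * μc (i - j)| ≤ 1/2 := by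
      apply sum_abs_le_of_support _ 18 hEs
      simp only [hμc]
      norm_num [Finset.sum_range_succ, List.getD_cons_zero, List.getD_cons_succ, List.getD,
        abs_of_nonneg, abs_of_nonpos]
    exact ⟨2 * (2146958/1000000 : ℝ), fun X _ _ τ hτ N e he =>
      bdf_master 6 (by norm_num) δc μc (fun n => ([(408163/1000000 : ℝ), (29571/50000 : ℝ), (198897/1000000 : ℝ), (-26591/125000 : ℝ), (-72633/500000 : ℝ), (2627/20000 : ℝ), (144991/1000000 : ℝ), (-11901/200000 : ℝ), (-63769/500000 : ℝ), (6627/1000000 : ℝ), (97027/1000000 : ℝ), (11723/500000 : ℝ)] : List ℝ).getD n 0) (2146958/1000000 : ℝ)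
        hδ0 hδj htop hEb hqb p hp X τ hτ N e he⟩
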